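/- For every real number α ≥ 0, on the Lie algebra A_{5,17}^{α,-α,1}⊕ℝ with structure equations (αe^{15}+e^{25}, -e^{15}+αe^{25}, -αe^{35}+e^{45}, -e^{35}-αe^{45}, 0, 0), the pair F = e^{13} + e^{24} + e^{56} and ρ = e^{125} - e^{146} + e^{236} - e^{345} satisfies dF = 0, dρ = 0, F^3 ≠ 0, and F∧ρ = 0. -/

import Mathlib

open ExteriorAlgebra

noncomputable section

/-- The exterior algebra Λ*(g*) of a 6-dimensional real Lie algebra g,
    identified with the exterior algebra on ℝ^6. -/
abbrev E6 : Type := ExteriorAlgebra ℝ (Fin 6 → ℝ)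

/-- The basis 1-forms e^1, ..., e^6 (0-indexed). -/
def e (i : Fin 6) : E6 := ι ℝ (Pi.single i 1)

/-- Structure equations of A_{5,17}^{α,-α,1} ⊕ ℝ, depending on the parameter α. -/
def d1 (α : ℝ) : Fin 6 → E6 :=
  ![α • (e 0 * e 4) + e 1 * e 4,
    -(e 0 * e 4) + α • (e 1 * e 4),
    -α • (e 2 * e 4) + e 3 * e 4,
    -(e 2 * e 4) - α • (e 3 * e 4),
    0, 0]

/-- Leibniz rule for 2-forms. -/
def d2 (α : ℝ) (i j : Fin 6) : E6 := d1 α i * e j - e i * d1 α j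

/-- Leibniz rule for 3-forms. -/
def d3 (α : ℝ) (i j k : Fin 6) : E6 :=
  d1 α i * e j * e k - e i * d1 α j * e k + e i * e j * d1 α k

/-- F = e^{13} + e^{24} + e^{56}. -/
def F : E6 := e 0 * e 2 + e 1 * e 3 + e 4 * e 5

/-- dF via the Leibniz rule. -/
def dF (α : ℝ) : E6 := d2 α 0 2 + d2 α 1 3 + d2 α 4 5

/-- ρ = e^{125} - e^{146} + e^{236} - e^{345}. -/
def ρ : E6 := e 0 * e 1 * e 4 - e 0 * e 3 * e 5 + e 1 * e 2 * e 5 - e 2 * e 3 * e 4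

/-- dρ via the Leibniz rule. -/
def dρ (α : ℝ) : E6 := d3 α 0 1 4 - d3 α 0 3 5 + d3 α 1 2 5 - d3 α 2 3 4

/- ### Auxiliary lemmas -/

lemma e_sq (i : Fin 6) : e i * e i = 0 := ι_sq_zero _

lemma e_sq' (i : Fin 6) (x : E6) : e i * (e i * x) = 0 := by
  rw [← mul_assoc, e_sq, zero_mul]

lemma e_swap (i j : Fin 6) (_ : j < i) : e i * e j = -(e j * e i) :=
  eq_neg_of_add_eq_zero_left (ι_add_mul_swap _ _)

lemma e_swap' (i j : Fin 6) (x : E6) (h : j < i) :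
    e i * (e j * x) = -(e j * (e i * x)) := by
  rw [← mul_assoc, e_swap i j h, neg_mul, mul_assoc]

lemma d1_0 (α : ℝ) : d1 α 0 = α • (e 0 * e 4) + e 1 * e 4 := rfl
lemma d1_1 (α : ℝ) : d1 α 1 = -(e 0 * e 4) + α • (e 1 * e 4) := rfl
lemma d1_2 (α : ℝ) : d1 α 2 = -α • (e 2 * e 4) + e 3 * e 4 := rfl
lemma d1_3 (α : ℝ) : d1 α 3 = -(e 2 * e 4) - α • (e 3 * e 4) := rfl
lemma d1_4 (α : ℝ) : d1 α 4 = 0 := rfl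
lemma d1_5 (α : ℝ) : d1 α 5 = 0 := rfl

lemma dF_eq_zero (α : ℝ) : dF α = 0 := by
  simp only [dF, d2, d1_0, d1_1, d1_2, d1_3, d1_4, d1_5]
  simp only [mul_assoc, add_mul, sub_mul, neg_mul, mul_add, mul_sub, mul_neg,
    smul_mul_assoc, mul_smul_comm, mul_zero, zero_mul]
  simp (disch := decide) only [e_sq, e_sq', e_swap, e_swap',
    mul_zero, mul_neg, neg_neg, smul_neg, smul_zero, neg_zero]
  module

lemma dρ_eq_zero (α : ℝ) : dρ α = 0 := by
  simp only [dρ, d3, d1_0, d1_1, d1_2, d1_3, d1_4, d1_5]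
  simp only [mul_assoc, add_mul, sub_mul, neg_mul, mul_add, mul_sub, mul_neg,
    smul_mul_assoc, mul_smul_comm, mul_zero, zero_mul]
  simp (disch := decide) only [e_sq, e_sq', e_swap, e_swap',
    mul_zero, mul_neg, neg_neg, smul_neg, smul_zero, neg_zero]
  module

lemma F_mul_ρ : F * ρ = 0 := by
  simp only [F, ρ]
  simp only [mul_assoc, add_mul, sub_mul, neg_mul, mul_add, mul_sub, mul_neg,
    smul_mul_assoc, mul_smul_comm, mul_zero, zero_mul]
  simp (disch := decide) only [e_sq, e_sq', e_swap, e_swap',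
    mul_zero, mul_neg, neg_neg, smul_neg, smul_zero, neg_zero]
  module

lemma F_cubed : F * F * F = -(6:ℝ) • (e 0 * (e 1 * (e 2 * (e 3 * (e 4 * e 5))))) := by
  simp only [F]
  simp only [mul_assoc, add_mul, sub_mul, neg_mul, mul_add, mul_sub, mul_neg,
    smul_mul_assoc, mul_smul_comm, mul_zero, zero_mul]
  simp (disch := decide) only [e_sq, e_sq', e_swap, e_swap',
    mul_zero, mul_neg, neg_neg, smul_neg, smul_zero, neg_zero]
  module

/-- A linear functional on `E6` extracting the top-degree coefficient. -/
def detMap : E6 →ₗ[ℝ] ℝ :=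
  liftAlternating (fun i => match i with
    | 6 => Matrix.detRowAlternating
    | _ => 0)

lemma top_form_eq : e 0 * (e 1 * (e 2 * (e 3 * (e 4 * e 5)))) =
    ιMulti ℝ 6 (fun i : Fin 6 => (Pi.single i 1 : Fin 6 → ℝ)) := by
  rw [ιMulti_apply]
  norm_num [List.ofFn_succ, e]
  rfl

lemma top_form_ne_zero : e 0 * (e 1 * (e 2 * (e 3 * (e 4 * e 5)))) ≠ 0 := by
  intro h
  have h1 : detMap (e 0 * (e 1 * (e 2 * (e 3 * (e 4 * e 5))))) = 1 := by
    rw [top_form_eq, detMap, liftAlternating_apply_ιMulti]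
    show Matrix.detRowAlternating _ = 1
    have : (fun i : Fin 6 => (Pi.single i 1 : Fin 6 → ℝ)) =
        (1 : Matrix (Fin 6) (Fin 6) ℝ) := by
      funext i j
      simp [Matrix.one_apply, Pi.single_apply, eq_comm]
    rw [this]
    set_option maxRecDepth 10000 in exact Matrix.det_one
  rw [h, map_zero] at h1
  exact one_ne_zero h1.symm

/-- For every α ≥ 0, (F, ρ) is a symplectic half-flat pair on A_{5,17}^{α,-α,1} ⊕ ℝ. -/
theorem stmt9 : ∀ α : ℝ, 0 ≤ α →
    dF α = 0 ∧ dρ α = 0 ∧ F * F * F ≠ 0 ∧ F * ρ = 0 := by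
  intro α _
  refine ⟨dF_eq_zero α, dρ_eq_zero α, ?_, F_mul_ρ⟩
  rw [F_cubed]
  intro h
  apply top_form_ne_zero
  have h6 : (-(6:ℝ)) ≠ 0 := by norm_num
  exact (smul_eq_zero.mp h).resolve_left h6
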